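/- As B → ∞, ∫_{ℝ^d} | π̃_B(θ) − π̂_B(θ) | dθ → 0 in probability. -/

import Mathlib

open MeasureTheory Finset Filter
open scoped Classical Topology


section Aux

variable {d : ℕ}

local notation "E" => EuclideanSpace ℝ (Fin d)

private lemma aux_cov (F : E → ℝ) {h : ℝ} (hh : 0 < h) (y : E) :
    ∫ x, F (h⁻¹ • (x - y)) = h ^ d * ∫ x, F x := by
  rw [show ∫ x, F (h⁻¹ • (x - y)) = ∫ x, (fun z => F (h⁻¹ • z)) (x - y) from rfl,
    integral_sub_right_eq_self (fun z => F (h⁻¹ • z)) y,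
    Measure.integral_comp_inv_smul_of_nonneg volume F hh.le, finrank_euclideanSpace_fin]
  simp [smul_eq_mul]

private lemma aux_shift_eq (K f : E → ℝ) {h : ℝ} (hh : 0 < h) (y : E) :
    ∫ x, K (h⁻¹ • (x - y)) * f x = h ^ d * ∫ u, K u * f (y + h • u) := by
  have e : ∀ x : E, K (h⁻¹ • (x - y)) * f x
      = (fun u => K u * f (y + h • u)) (h⁻¹ • (x - y)) := by
    intro x
    simp only [smul_inv_smul₀ hh.ne']
    rw [add_sub_cancel]
  simp_rw [e]
  exact aux_cov (fun u => K u * f (y + h • u)) hh y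

private lemma aux_int_shift {K : E → ℝ} (hKi : Integrable K) {f : E → ℝ} (hf : Measurable f)
    {c : ℝ} (hfb : ∀ x, |f x| ≤ c) (h : ℝ) (y : E) :
    Integrable fun u : E => K u * f (y + h • u) := by
  have hm : Measurable fun u : E => f (y + h • u) :=
    hf.comp (measurable_const.add (measurable_id.const_smul h))
  have := hKi.bdd_mul hm.aestronglyMeasurable (Filter.Eventually.of_forall fun x => by simpa using hfb _)
  exact this.congr (Filter.Eventually.of_forall fun x => mul_comm _ _)

private lemma aux_int_kern {K : E → ℝ} (hKi : Integrable K) {f : E → ℝ} (hf : Measurable f)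
    {c : ℝ} (hfb : ∀ x, |f x| ≤ c) {h : ℝ} (hh : 0 < h) (y : E) :
    Integrable fun x : E => K (h⁻¹ • (x - y)) * f x := by
  have hKi2 : Integrable fun x : E => K (h⁻¹ • (x - y)) :=
    (hKi.comp_smul (inv_ne_zero hh.ne')).comp_sub_right y
  have := hKi2.bdd_mul hf.aestronglyMeasurable (Filter.Eventually.of_forall fun x => by simpa using hfb x)
  exact this.congr (Filter.Eventually.of_forall fun x => mul_comm _ _)

private lemma aux_mom_bound {K : E → ℝ} (hKnonneg : ∀ u, 0 ≤ K u)
    (hKmom : Integrable fun u : E => K u * ‖u‖)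
    {g : E → ℝ} (hint : Integrable fun u : E => K u * g u)
    {B : ℝ} (hgB : ∀ u, |g u| ≤ B * ‖u‖) :
    |∫ u, K u * g u| ≤ B * ∫ u, K u * ‖u‖ := by
  calc |∫ u, K u * g u| ≤ ∫ u, |K u * g u| := by
        have := norm_integral_le_integral_norm (μ := (volume : Measure E)) (fun u : E => K u * g u)
        simpa only [Real.norm_eq_abs] using this
    _ ≤ ∫ u, B * (K u * ‖u‖) := by
        refine integral_mono hint.abs (hKmom.const_mul B) fun u => ?_
        rw [abs_mul, abs_of_nonneg (hKnonneg u)]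
        calc K u * |g u| ≤ K u * (B * ‖u‖) :=
              mul_le_mul_of_nonneg_left (hgB u) (hKnonneg u)
          _ = B * (K u * ‖u‖) := by ring
    _ = B * ∫ u, K u * ‖u‖ := integral_const_mul _ _


private lemma aux_core
    (M : ℝ) (hM : 0 < M)
    (L : E → ℝ) (hLnonneg : ∀ x, 0 ≤ L x) (hLmeas : Measurable L)
    (hLlip : ∀ x y : E, |L x - L y| ≤ M * ‖x - y‖)
    (CL : ℝ) (hCL : ∀ x, L x ≤ CL)
    (K : E → ℝ) (hKmeas : Measurable K) (hKnonneg : ∀ u, 0 ≤ K u)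
    (hKi : Integrable K) (hKint : ∫ u, K u = 1)
    (hKmom : Integrable fun u : E => K u * ‖u‖)
    (n : ℕ) (h : ℝ) (hh : 0 < h) (y : ℕ → E)
    (hS : 0 < ∑ i ∈ Finset.range n, L (y i))
    (D : ℝ)
    (hD : D = ∫ τ, (1 / (n * h ^ d) * ∑ i ∈ Finset.range n, K (h⁻¹ • (τ - y i))) * L τ) :
    (∑ i ∈ Finset.range n, L (y i)) - n * (M * h * ∫ u, K u * ‖u‖) ≤ n * D ∧
      (0 < D →
        (∫ x, |(∑ i ∈ Finset.range n, K (h⁻¹ • (x - y i)) * L (y i)) /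
              (h ^ d * ∑ i ∈ Finset.range n, L (y i)) -
            (1 / (n * h ^ d) * ∑ i ∈ Finset.range n, K (h⁻¹ • (x - y i))) * L x / D|)
          ≤ 2 * (n * (M * h * ∫ u, K u * ‖u‖)) / ∑ i ∈ Finset.range n, L (y i)) := by
  set C : ℝ := ∫ u, K u * ‖u‖ with hCdef
  set S : ℝ := ∑ i ∈ Finset.range n, L (y i) with hSdef
  have hn : 0 < n := by
    rcases Nat.eq_zero_or_pos n with rfl | hn
    · simp [hSdef] at hS
    · exact hn
  have hnR : (0 : ℝ) < n := by exact_mod_cast hn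
  have hC0 : 0 ≤ C := integral_nonneg fun u => mul_nonneg (hKnonneg u) (norm_nonneg u)
  have hhd : 0 < h ^ d := pow_pos hh d
  have hLabs : ∀ x : E, |L x| ≤ CL := fun x => by
    rw [abs_of_nonneg (hLnonneg x)]; exact hCL x
  have hCL0 : 0 ≤ CL := (hLnonneg 0).trans (hCL 0)
  -- J i
  set J : ℕ → ℝ := fun i => ∫ u, K u * L (y i + h • u) with hJdef
  have hJset : ∀ i, ∫ x, K (h⁻¹ • (x - y i)) * L x = h ^ d * J i := fun i =>
    aux_shift_eq K L hh (y i)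
  have hJ_close : ∀ i, |J i - L (y i)| ≤ M * h * C := by
    intro i
    have hmg : Measurable fun u : E => L (y i + h • u) - L (y i) :=
      (hLmeas.comp (measurable_const.add (measurable_id.const_smul h))).sub measurable_const
    have hint1 : Integrable fun u : E => K u * L (y i + h • u) :=
      aux_int_shift hKi hLmeas hLabs h (y i)
    have hint2 : Integrable fun u : E => K u * L (y i) := hKi.mul_const _
    have hEq : ∫ u, K u * (L (y i + h • u) - L (y i)) = J i - L (y i) := by
      simp_rw [mul_sub]
      rw [integral_sub hint1 hint2, integral_mul_const, hKint, one_mul, hJdef]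
    have hlip : ∀ u : E, |L (y i + h • u) - L (y i)| ≤ (M * h) * ‖u‖ := by
      intro u
      have := hLlip (y i + h • u) (y i)
      rw [add_sub_cancel_left, norm_smul, Real.norm_eq_abs, abs_of_pos hh] at this
      calc |L (y i + h • u) - L (y i)| ≤ M * (h * ‖u‖) := this
        _ = M * h * ‖u‖ := by ring
    have hint3 : Integrable fun u : E => K u * (L (y i + h • u) - L (y i)) := by
      simp_rw [mul_sub]; exact hint1.sub hint2
    have hfin := aux_mom_bound hKnonneg hKmom hint3 hlip
    rw [hEq] at hfin
    exact hfin
  have hJnonneg : ∀ i, 0 ≤ J i := fun i =>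
    integral_nonneg fun u => mul_nonneg (hKnonneg u) (hLnonneg _)
  -- value of ∫ T·L
  have hTLint : ∀ i ∈ Finset.range n,
      Integrable fun x : E => K (h⁻¹ • (x - y i)) * L x := fun i _ =>
    aux_int_kern hKi hLmeas hLabs hh (y i)
  have hTL : ∫ x, (∑ i ∈ Finset.range n, K (h⁻¹ • (x - y i))) * L x
      = h ^ d * ∑ i ∈ Finset.range n, J i := by
    simp_rw [Finset.sum_mul]
    rw [integral_finset_sum _ hTLint, Finset.mul_sum]
    exact Finset.sum_congr rfl fun i _ => hJset i
  set P : ℝ := ∑ i ∈ Finset.range n, J i with hPdef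
  have hnD : (n : ℝ) * D = P := by
    rw [hD]
    have e : ∀ τ : E, (1 / (n * h ^ d) * ∑ i ∈ Finset.range n, K (h⁻¹ • (τ - y i))) * L τ
        = 1 / (↑n * h ^ d) * ((∑ i ∈ Finset.range n, K (h⁻¹ • (τ - y i))) * L τ) :=
      fun τ => by ring
    simp_rw [e]
    rw [integral_const_mul, hTL]
    field_simp
  have hPS : |P - S| ≤ n * (M * h * C) := by
    have : P - S = ∑ i ∈ Finset.range n, (J i - L (y i)) := by
      rw [Finset.sum_sub_distrib]
    rw [this]
    calc |∑ i ∈ Finset.range n, (J i - L (y i))|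
        ≤ ∑ i ∈ Finset.range n, |J i - L (y i)| := Finset.abs_sum_le_sum_abs _ _
      _ ≤ ∑ _i ∈ Finset.range n, (M * h * C) := Finset.sum_le_sum fun i _ => hJ_close i
      _ = n * (M * h * C) := by rw [Finset.sum_const, Finset.card_range, nsmul_eq_mul]
  constructor
  · rw [hnD]
    have := abs_le.mp hPS
    linarith [this.1]
  · intro hDpos
    have hPpos : 0 < P := hnD ▸ mul_pos hnR hDpos
    have hDP : D = P / n := by field_simp [hnR.ne'] at hnD ⊢; linarith [hnD]
    -- integrands
    have hKi_i : ∀ i : ℕ, Integrable fun x : E => K (h⁻¹ • (x - y i)) := fun i =>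
      (hKi.comp_smul (inv_ne_zero hh.ne')).comp_sub_right (y i)
    have hInt_A : Integrable fun x : E => ∑ i ∈ Finset.range n, K (h⁻¹ • (x - y i)) * L (y i) :=
      integrable_finset_sum _ fun i _ => (hKi_i i).mul_const _
    have hInt_TL : Integrable fun x : E => (∑ i ∈ Finset.range n, K (h⁻¹ • (x - y i))) * L x := by
      simp_rw [Finset.sum_mul]
      exact integrable_finset_sum _ hTLint
    have habsL : ∀ i, ∀ x : E, |L (y i) - L x| ≤ CL := by
      intro i x
      rw [abs_le]
      constructor
      · linarith [hLnonneg x, hCL x, hLnonneg (y i)]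
      · linarith [hLnonneg x, hCL (y i)]
    have habsLmeas : ∀ i, Measurable fun x : E => |L (y i) - L x| := fun i =>
      (measurable_const.sub hLmeas).abs
    have habsLabs : ∀ i, ∀ x : E, abs (abs (L (y i) - L x)) ≤ CL := fun i x => by
      rw [abs_abs]; exact habsL i x
    have hInt_Wi : ∀ i ∈ Finset.range n,
        Integrable fun x : E => K (h⁻¹ • (x - y i)) * |L (y i) - L x| := fun i _ =>
      aux_int_kern hKi (habsLmeas i) (habsLabs i) hh (y i)
    have hInt_W : Integrable fun x : E =>
        ∑ i ∈ Finset.range n, K (h⁻¹ • (x - y i)) * |L (y i) - L x| :=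
      integrable_finset_sum _ hInt_Wi
    -- bound on ∫ W
    have hWi_bound : ∀ i, (∫ x, K (h⁻¹ • (x - y i)) * |L (y i) - L x|)
        ≤ h ^ d * (M * h * C) := by
      intro i
      rw [aux_shift_eq K (fun x => |L (y i) - L x|) hh (y i)]
      have hint : Integrable fun u : E => K u * |L (y i) - L (y i + h • u)| :=
        aux_int_shift hKi (habsLmeas i) (habsLabs i) h (y i)
      have hgB : ∀ u : E, abs (abs (L (y i) - L (y i + h • u))) ≤ (M * h) * ‖u‖ := by
        intro u
        rw [abs_abs]
        have := hLlip (y i) (y i + h • u)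
        have e : y i - (y i + h • u) = -(h • u) := by abel
        rw [e, norm_neg, norm_smul, Real.norm_eq_abs, abs_of_pos hh] at this
        calc |L (y i) - L (y i + h • u)| ≤ M * (h * ‖u‖) := this
          _ = M * h * ‖u‖ := by ring
      have hb := aux_mom_bound hKnonneg hKmom hint hgB
      have hnn : 0 ≤ ∫ u, K u * |L (y i) - L (y i + h • u)| :=
        integral_nonneg fun u => mul_nonneg (hKnonneg u) (abs_nonneg _)
      have : (∫ u, K u * |L (y i) - L (y i + h • u)|) ≤ M * h * C := by
        rw [← abs_of_nonneg hnn]; exact hb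
      exact mul_le_mul_of_nonneg_left this hhd.le
    have hW_bound : (∫ x, ∑ i ∈ Finset.range n,
        K (h⁻¹ • (x - y i)) * |L (y i) - L x|) ≤ n * (h ^ d * (M * h * C)) := by
      rw [integral_finset_sum _ hInt_Wi]
      calc ∑ i ∈ Finset.range n, ∫ x, K (h⁻¹ • (x - y i)) * |L (y i) - L x|
          ≤ ∑ _i ∈ Finset.range n, h ^ d * (M * h * C) :=
            Finset.sum_le_sum fun i _ => hWi_bound i
        _ = n * (h ^ d * (M * h * C)) := by
            rw [Finset.sum_const, Finset.card_range, nsmul_eq_mul]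
    -- pointwise |A - T L| ≤ W
    have hptw : ∀ x : E, |(∑ i ∈ Finset.range n, K (h⁻¹ • (x - y i)) * L (y i))
        - (∑ i ∈ Finset.range n, K (h⁻¹ • (x - y i))) * L x|
        ≤ ∑ i ∈ Finset.range n, K (h⁻¹ • (x - y i)) * |L (y i) - L x| := by
      intro x
      have e : (∑ i ∈ Finset.range n, K (h⁻¹ • (x - y i)) * L (y i))
          - (∑ i ∈ Finset.range n, K (h⁻¹ • (x - y i))) * L x
          = ∑ i ∈ Finset.range n, K (h⁻¹ • (x - y i)) * (L (y i) - L x) := by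
        rw [Finset.sum_mul, ← Finset.sum_sub_distrib]
        exact Finset.sum_congr rfl fun i _ => by ring
      rw [e]
      calc |∑ i ∈ Finset.range n, K (h⁻¹ • (x - y i)) * (L (y i) - L x)|
          ≤ ∑ i ∈ Finset.range n, |K (h⁻¹ • (x - y i)) * (L (y i) - L x)| :=
            Finset.abs_sum_le_sum_abs _ _
        _ = ∑ i ∈ Finset.range n, K (h⁻¹ • (x - y i)) * |L (y i) - L x| :=
            Finset.sum_congr rfl fun i _ => by
              rw [abs_mul, abs_of_nonneg (hKnonneg _)]
    -- the three functions
    set A : E → ℝ := fun x => ∑ i ∈ Finset.range n, K (h⁻¹ • (x - y i)) * L (y i) with hAdef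
    set T : E → ℝ := fun x => ∑ i ∈ Finset.range n, K (h⁻¹ • (x - y i)) with hTdef
    have hInt_f : Integrable fun x : E => A x / (h ^ d * S) := hInt_A.div_const _
    have hInt_m : Integrable fun x : E => T x * L x / (h ^ d * S) := hInt_TL.div_const _
    have hInt_g : Integrable fun x : E => 1 / (↑n * h ^ d) * T x * L x / D := by
      have e : (fun x : E => 1 / (↑n * h ^ d) * T x * L x / D)
          = fun x : E => T x * L x * (1 / (↑n * h ^ d) / D) := funext fun x => by ring
      rw [e]
      exact hInt_TL.mul_const _
    -- but goal has (1 / (↑n * h ^ d) * T x) * L x / D : same expression up to assoc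
    have htri : ∀ x : E, |A x / (h ^ d * S) - 1 / (↑n * h ^ d) * T x * L x / D|
        ≤ |A x / (h ^ d * S) - T x * L x / (h ^ d * S)|
          + |T x * L x / (h ^ d * S) - 1 / (↑n * h ^ d) * T x * L x / D| := fun x =>
      abs_sub_le _ _ _
    have hIfm : Integrable fun x : E =>
        |A x / (h ^ d * S) - T x * L x / (h ^ d * S)| := by
      exact (hInt_f.sub hInt_m).abs
    have hImg : Integrable fun x : E =>
        |T x * L x / (h ^ d * S) - 1 / (↑n * h ^ d) * T x * L x / D| := by
      exact (hInt_m.sub hInt_g).abs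
    have hIfg : Integrable fun x : E =>
        |A x / (h ^ d * S) - 1 / (↑n * h ^ d) * T x * L x / D| := by
      exact (hInt_f.sub hInt_g).abs
    have hsplit : (∫ x, |A x / (h ^ d * S) - 1 / (↑n * h ^ d) * T x * L x / D|)
        ≤ (∫ x, |A x / (h ^ d * S) - T x * L x / (h ^ d * S)|)
          + ∫ x, |T x * L x / (h ^ d * S) - 1 / (↑n * h ^ d) * T x * L x / D| := by
      calc (∫ x, |A x / (h ^ d * S) - 1 / (↑n * h ^ d) * T x * L x / D|)
          ≤ ∫ x, |A x / (h ^ d * S) - T x * L x / (h ^ d * S)|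
              + |T x * L x / (h ^ d * S) - 1 / (↑n * h ^ d) * T x * L x / D| :=
            integral_mono hIfg (hIfm.add hImg) htri
        _ = _ := integral_add hIfm hImg
    -- bound 1
    have hb1 : (∫ x, |A x / (h ^ d * S) - T x * L x / (h ^ d * S)|)
        ≤ n * (M * h * C) / S := by
      have e : ∀ x : E, |A x / (h ^ d * S) - T x * L x / (h ^ d * S)|
          = |A x - T x * L x| / (h ^ d * S) := by
        intro x
        rw [div_sub_div_same, abs_div, abs_of_pos (mul_pos hhd hS)]
      simp_rw [e]
      rw [integral_div]
      have h1 : (∫ x, |A x - T x * L x|)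
          ≤ n * (h ^ d * (M * h * C)) := by
        refine le_trans (integral_mono (hInt_A.sub hInt_TL).abs hInt_W hptw) hW_bound
      calc (∫ x, |A x - T x * L x|) / (h ^ d * S)
          ≤ n * (h ^ d * (M * h * C)) / (h ^ d * S) :=
            (div_le_div_iff_of_pos_right (mul_pos hhd hS)).mpr h1
        _ = n * (M * h * C) / S := by
            field_simp
    -- bound 2
    have hb2 : (∫ x, |T x * L x / (h ^ d * S) - 1 / (↑n * h ^ d) * T x * L x / D|)
        ≤ n * (M * h * C) / S := by
      set q : ℝ := 1 / (h ^ d * S) - 1 / (↑n * h ^ d) / D with hqdef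
      have e : ∀ x : E, T x * L x / (h ^ d * S) - 1 / (↑n * h ^ d) * T x * L x / D
          = T x * L x * q := fun x => by rw [hqdef]; ring
      have hTnonneg : ∀ x : E, 0 ≤ T x := fun x =>
        Finset.sum_nonneg fun i _ => hKnonneg _
      have e2 : ∀ x : E, |T x * L x * q| = T x * L x * |q| := by
        intro x
        rw [abs_mul, abs_of_nonneg (mul_nonneg (hTnonneg x) (hLnonneg x))]
      simp_rw [e, e2]
      rw [integral_mul_const, hTL]
      have hq : q = (P - S) / (h ^ d * S * P) := by
        rw [hqdef, hDP]
        field_simp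
      rw [hq, abs_div, abs_of_pos (by positivity : (0:ℝ) < h ^ d * S * P)]
      have e3 : h ^ d * P * (|P - S| / (h ^ d * S * P)) = |P - S| / S := by
        field_simp
      rw [e3]
      exact (div_le_div_iff_of_pos_right hS).mpr hPS
    -- combine
    have := hsplit.trans (add_le_add hb1 hb2)
    have efin : n * (M * h * C) / S + n * (M * h * C) / S
        = 2 * (↑n * (M * h * C)) / S := by ring
    -- match goal integrand assoc
    have egoal : ∀ x : E, (1 / (↑n * h ^ d) * T x) * L x / D
        = 1 / (↑n * h ^ d) * T x * L x / D := fun x => rfl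
    calc (∫ x, |A x / (h ^ d * S) - (1 / (↑n * h ^ d) * T x) * L x / D|)
        ≤ n * (M * h * C) / S + n * (M * h * C) / S := this
      _ = 2 * (↑n * (M * h * C)) / S := efin

end Aux

/-- `∫ |π̃_B − π̂_B| → 0` in probability as `B → ∞`. -/
theorem stmt_5
    (d : ℕ) (hd : 1 ≤ d)
    (π : EuclideanSpace ℝ (Fin d) → ℝ)
    (hπnonneg : ∀ x, 0 ≤ π x) (hπmeas : Measurable π) (hπint : ∫ x, π x = 1)
    (M : ℝ) (hM : 0 < M)
    (L : EuclideanSpace ℝ (Fin d) → ℝ)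
    (hLnonneg : ∀ x, 0 ≤ L x) (hLmeas : Measurable L)
    (hLlip : ∀ x y, |L x - L y| ≤ M * ‖x - y‖)
    (hLbdd : BddAbove (Set.range L))
    (hπL0 : 0 < ∫ x, π x * L x) (hπLint : Integrable (fun x => π x * L x))
    (K : EuclideanSpace ℝ (Fin d) → ℝ)
    (hKmeas : Measurable K) (hKnonneg : ∀ u, 0 ≤ K u) (hKint : ∫ u, K u = 1)
    (hKmom : Integrable (fun u => K u * ‖u‖))
    (Ω : Type) [MeasureSpace Ω] [IsProbabilityMeasure (volume : Measure Ω)]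
    (θs : ℕ → Ω → EuclideanSpace ℝ (Fin d))
    (hθmeas : ∀ i, Measurable (θs i))
    (hiid : ProbabilityTheory.iIndepFun θs (volume : Measure Ω))
    (hlaw : ∀ i, Measure.map (θs i) (volume : Measure Ω) =
      volume.withDensity (fun x => ENNReal.ofReal (π x)))
    (hb : ℕ → ℝ) (hhb : ∀ n, 0 < hb n)
    (hb0 : Tendsto hb atTop (nhds 0))
    (KDE : ℕ → Ω → EuclideanSpace ℝ (Fin d) → ℝ)
    (hKDE : ∀ n ω x, KDE n ω x =
      (1 / (n * hb n ^ d)) * ∑ i ∈ Finset.range n, K ((hb n)⁻¹ • (x - θs i ω)))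
    (πtil : ℕ → Ω → EuclideanSpace ℝ (Fin d) → ℝ)
    (hπtil : ∀ n ω x, πtil n ω x =
      (∑ i ∈ Finset.range n, K ((hb n)⁻¹ • (x - θs i ω)) * L (θs i ω)) /
        (hb n ^ d * ∑ i ∈ Finset.range n, L (θs i ω)))
    (πhat : ℕ → Ω → EuclideanSpace ℝ (Fin d) → ℝ)
    (hπhat : ∀ n ω x, πhat n ω x = KDE n ω x * L x / ∫ τ, KDE n ω τ * L τ)
    (X : ℕ → Ω → ℝ)
    -- the L¹ distance between `π̃_B` and `π̂_B`, set to `0` by convention on the degenerate event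
    (hX : ∀ n ω, X n ω =
      if 0 < ∑ i ∈ Finset.range n, L (θs i ω) ∧ 0 < ∫ τ, KDE n ω τ * L τ then
        ∫ x, |πtil n ω x - πhat n ω x|
      else 0) :
    TendstoInMeasure (volume : Measure Ω) X atTop (fun _ => (0 : ℝ)) := by
  classical
  obtain ⟨CL, hCLub⟩ := hLbdd
  have hCL : ∀ x, L x ≤ CL := fun x => hCLub ⟨x, rfl⟩
  have hKi : Integrable K := by
    by_contra hc
    rw [integral_undef hc] at hKint
    norm_num at hKint
  set C : ℝ := ∫ u, K u * ‖u‖ with hCdef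
  have hC0 : 0 ≤ C := integral_nonneg fun u => mul_nonneg (hKnonneg u) (norm_nonneg u)
  set ℓ : ℝ := ∫ x, π x * L x with hldef
  have hℓ : 0 < ℓ := hπL0
  -- the random variables L(θ_i)
  have hYmeas : ∀ i, Measurable fun ω => L (θs i ω) := fun i => hLmeas.comp (hθmeas i)
  have hYint : Integrable fun ω => L (θs 0 ω) := by
    refine Integrable.mono' (integrable_const CL) (hYmeas 0).aestronglyMeasurable ?_
    exact Filter.Eventually.of_forall fun ω => by
      rw [Real.norm_eq_abs, abs_of_nonneg (hLnonneg _)]; exact hCL _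
  have hYindep : Pairwise (Function.onFun (ProbabilityTheory.IndepFun · · (volume : Measure Ω))
      fun i ω => L (θs i ω)) := by
    intro i j hij
    exact (hiid.indepFun hij).comp hLmeas hLmeas
  have hYident : ∀ i, ProbabilityTheory.IdentDistrib (fun ω => L (θs i ω)) (fun ω => L (θs 0 ω))
      (volume : Measure Ω) (volume : Measure Ω) := by
    intro i
    refine ⟨(hYmeas i).aemeasurable, (hYmeas 0).aemeasurable, ?_⟩
    have h1 : Measure.map (fun ω => L (θs i ω)) (volume : Measure Ω)
        = Measure.map L (Measure.map (θs i) volume) :=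
      (Measure.map_map hLmeas (hθmeas i)).symm
    have h0 : Measure.map (fun ω => L (θs 0 ω)) (volume : Measure Ω)
        = Measure.map L (Measure.map (θs 0) volume) :=
      (Measure.map_map hLmeas (hθmeas 0)).symm
    rw [h1, h0, hlaw i, hlaw 0]
  have hmean : (∫ ω, L (θs 0 ω)) = ℓ := by
    have h1 : ∫ ω, L (θs 0 ω) = ∫ x, L x ∂(Measure.map (θs 0) (volume : Measure Ω)) :=
      (integral_map (hθmeas 0).aemeasurable hLmeas.aestronglyMeasurable).symm
    rw [h1, hlaw 0]
    have h2 : (fun x : EuclideanSpace ℝ (Fin d) => ENNReal.ofReal (π x))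
        = fun x : EuclideanSpace ℝ (Fin d) => ((Real.toNNReal (π x) : NNReal) : ENNReal) := rfl
    have hm : Measurable fun x : EuclideanSpace ℝ (Fin d) => Real.toNNReal (π x) := by
      exact measurable_real_toNNReal.comp hπmeas
    rw [h2, integral_withDensity_eq_integral_smul hm L, hldef]
    congr 1
    funext x
    rw [NNReal.smul_def, smul_eq_mul, Real.coe_toNNReal _ (hπnonneg x)]
  have hslln := ProbabilityTheory.strong_law_ae_real (fun i ω => L (θs i ω)) hYint hYindep hYident
  have hae : ∀ᵐ ω ∂(volume : Measure Ω),
      Tendsto (fun n : ℕ => (∑ i ∈ Finset.range n, L (θs i ω)) / n) atTop (𝓝 ℓ) := by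
    rw [← hmean]
    exact hslln
  have hZmeas : ∀ n : ℕ, AEStronglyMeasurable
      (fun ω => (∑ i ∈ Finset.range n, L (θs i ω)) / (n : ℝ)) (volume : Measure Ω) := fun n =>
    ((Finset.measurable_sum (Finset.range n) fun i _ => hYmeas i).div_const _).aestronglyMeasurable
  have hZtm : TendstoInMeasure (volume : Measure Ω)
      (fun n ω => (∑ i ∈ Finset.range n, L (θs i ω)) / (n : ℝ)) atTop (fun _ => ℓ) :=
    tendstoInMeasure_of_tendsto_ae hZmeas hae
  rw [tendstoInMeasure_iff_dist]
  intro ε hε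
  have hGlim := tendstoInMeasure_iff_dist.mp hZtm (ℓ/2) (by positivity)
  have hMC : Tendsto (fun n => M * hb n * C) atTop (𝓝 0) := by
    have h1 : Tendsto (fun n => M * hb n * C) atTop (𝓝 (M * 0 * C)) :=
      (tendsto_const_nhds.mul hb0).mul tendsto_const_nhds
    simpa using h1
  have hA : ∀ᶠ n in atTop, M * hb n * C < ℓ/4 :=
    hMC.eventually_lt_const (by positivity)
  have hB : ∀ᶠ n in atTop, 4 * (M * hb n * C) / ℓ < ε := by
    have h1 : Tendsto (fun n => 4 * (M * hb n * C) / ℓ) atTop (𝓝 (4 * 0 / ℓ)) :=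
      (hMC.const_mul 4).div_const ℓ
    have h2 : Tendsto (fun n => 4 * (M * hb n * C) / ℓ) atTop (𝓝 0) := by
      simpa using h1
    exact h2.eventually_lt_const hε
  have hsub : ∀ᶠ n in atTop,
      volume {ω | ε ≤ dist (X n ω) 0}
        ≤ volume {ω | ℓ/2 ≤ dist ((∑ i ∈ Finset.range n, L (θs i ω)) / (n : ℝ)) ℓ} := by
    filter_upwards [hA, hB] with n hAn hBn
    refine measure_mono fun ω hω => ?_
    simp only [Set.mem_setOf_eq] at hω ⊢
    by_contra hcon
    push_neg at hcon
    rw [Real.dist_eq] at hcon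
    have habs := abs_lt.mp hcon
    set Sv : ℝ := ∑ i ∈ Finset.range n, L (θs i ω) with hSvdef
    have hZω : ℓ/2 < Sv / n := by linarith [habs.1]
    have hnpos : 0 < n := by
      rcases Nat.eq_zero_or_pos n with rfl | hp
      · simp only [Finset.range_zero, Finset.sum_empty, hSvdef] at hZω
        norm_num at hZω
        linarith
      · exact hp
    have hnR : (0:ℝ) < n := by exact_mod_cast hnpos
    have hSn : (ℓ/2) * n < Sv := (lt_div_iff₀ hnR).mp hZω
    have hSpos : 0 < Sv := lt_trans (by positivity) hSn
    have hDeq : (∫ τ, KDE n ω τ * L τ)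
        = ∫ τ, (1 / ((n : ℝ) * hb n ^ d) * ∑ i ∈ Finset.range n,
            K ((hb n)⁻¹ • (τ - θs i ω))) * L τ := by
      simp only [hKDE]
    obtain ⟨hcore1, hcore2⟩ := aux_core M hM L hLnonneg hLmeas hLlip CL hCL K hKmeas hKnonneg
      hKi hKint hKmom n (hb n) (hhb n) (fun i => θs i ω) hSpos _ hDeq
    rw [← hCdef] at hcore1 hcore2
    have hDpos : 0 < ∫ τ, KDE n ω τ * L τ := by
      have h1 : Sv - n * (M * hb n * C) ≤ n * ∫ τ, KDE n ω τ * L τ := hcore1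
      nlinarith [hSn, hAn, hnR, h1]
    have hXval : X n ω = ∫ x, |πtil n ω x - πhat n ω x| := by
      rw [hX]; exact if_pos ⟨hSpos, hDpos⟩
    have hXbound : X n ω ≤ 2 * ((n : ℝ) * (M * hb n * C)) / Sv := by
      rw [hXval]
      have he : (fun x => |πtil n ω x - πhat n ω x|)
          = fun x => |(∑ i ∈ Finset.range n, K ((hb n)⁻¹ • (x - θs i ω)) * L (θs i ω)) /
              (hb n ^ d * ∑ i ∈ Finset.range n, L (θs i ω)) -
            (1 / ((n : ℝ) * hb n ^ d) * ∑ i ∈ Finset.range n, K ((hb n)⁻¹ • (x - θs i ω)))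
              * L x / ∫ τ, KDE n ω τ * L τ| := by
        funext x
        rw [hπtil, hπhat, hKDE]
      rw [he]
      exact hcore2 hDpos
    have hstep : 2 * ((n : ℝ) * (M * hb n * C)) / Sv ≤ 4 * (M * hb n * C) / ℓ := by
      rw [div_le_div_iff₀ hSpos hℓ]
      have ha : 0 ≤ M * hb n * C := mul_nonneg (mul_nonneg hM.le (hhb n).le) hC0
      nlinarith [hSn, ha, hnR]
    have hXnonneg : 0 ≤ X n ω := by
      rw [hXval]; exact integral_nonneg fun x => abs_nonneg _
    have hfin : dist (X n ω) 0 < ε := by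
      rw [Real.dist_eq, sub_zero, abs_of_nonneg hXnonneg]
      exact lt_of_le_of_lt (hXbound.trans hstep) hBn
    exact absurd hω (not_le.mpr hfin)
  exact tendsto_of_tendsto_of_tendsto_of_le_of_le' tendsto_const_nhds hGlim
    (Filter.Eventually.of_forall fun n => zero_le) hsub
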